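/- Every monoid S admitting a monoid homomorphism θ : S → ℕ with the unique factorization property is a free monoid. -/

import Mathlib

/-- θ : S → ℕ is a monoid homomorphism with the unique factorization property. -/
def UFPHom {S : Type*} [Monoid S] (θ : S → ℕ) : Prop :=
  θ 1 = 0 ∧ (∀ x y : S, θ (x * y) = θ x + θ y) ∧
  ∀ (a : S) (m n : ℕ), θ a = m + n →
    ∃! p : S × S, a = p.1 * p.2 ∧ θ p.1 = m ∧ θ p.2 = n

theorem ufp_implies_free {S : Type} [Monoid S] (θ : S → ℕ)
    (h : UFPHom θ) : ∃ A : Type, Nonempty (S ≃* FreeMonoid A) := by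
  obtain ⟨h1, hmul, hufp⟩ := h
  -- θ a = 0 → a = 1
  have hzero : ∀ a : S, θ a = 0 → a = 1 := by
    intro a ha
    obtain ⟨p, _, hu⟩ := hufp a 0 0 (by omega)
    have e1 : ((a, 1) : S × S) = p := hu _ ⟨(mul_one a).symm, ha, h1⟩
    have e2 : ((1, a) : S × S) = p := hu _ ⟨(one_mul a).symm, h1, ha⟩
    have := e1.trans e2.symm
    exact (Prod.mk.injEq _ _ _ _ ▸ this).1
  set A := {s : S // θ s = 1} with hA
  refine ⟨A, ⟨?_⟩⟩
  set ψ : FreeMonoid A →* S := FreeMonoid.lift (fun a : A => a.val) with hψ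
  have hcons : ∀ (a : A) (l : List A),
      ψ (FreeMonoid.ofList (a :: l)) = a.val * ψ (FreeMonoid.ofList l) := by
    intro a l
    rw [show FreeMonoid.ofList (a :: l) = FreeMonoid.of a * FreeMonoid.ofList l from rfl]
    simp [hψ]
  have hlen : ∀ l : List A, θ (ψ (FreeMonoid.ofList l)) = l.length := by
    intro l
    induction l with
    | nil => simpa [hψ] using h1
    | cons a t ih => rw [hcons, hmul, a.2, ih, List.length_cons]; omega
  have hinj : Function.Injective ψ := by
    intro w w' hw
    have key : ∀ (l l' : List A), ψ (FreeMonoid.ofList l) = ψ (FreeMonoid.ofList l') → l = l' := by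
      intro l
      induction l with
      | nil =>
        intro l' he
        have : (l' : List A).length = 0 := by
          have := hlen l'
          rw [← he, hlen] at this
          simpa using this.symm
        cases l' with
        | nil => rfl
        | cons a t => simp at this
      | cons a t ih =>
        intro l' he
        cases l' with
        | nil =>
          have := hlen (a :: t)
          rw [he, hlen] at this
          simp at this
        | cons a' t' =>
          rw [hcons, hcons] at he
          obtain ⟨p, _, hu⟩ := hufp (a.val * ψ (FreeMonoid.ofList t)) 1 t.length
            (by rw [hmul, a.2, hlen])
          have e1 : ((a.val, ψ (FreeMonoid.ofList t)) : S × S) = p :=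
            hu _ ⟨rfl, a.2, hlen t⟩
          have hlt : t'.length = t.length := by
            have h1' := hlen (a :: t)
            have h2' := hlen (a' :: t')
            rw [hcons] at h1' h2'
            rw [← he] at h2'
            simp only [List.length_cons] at h1' h2'
            omega
          have e2 : ((a'.val, ψ (FreeMonoid.ofList t')) : S × S) = p :=
            hu _ ⟨he, a'.2, by rw [hlen, hlt]⟩
          have heq := e1.trans e2.symm
          have ha : a.val = a'.val := congrArg Prod.fst heq
          have ht : ψ (FreeMonoid.ofList t) = ψ (FreeMonoid.ofList t') :=
            congrArg Prod.snd heq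
          rw [ih t' ht, Subtype.ext ha]
    exact key w.toList w'.toList (by simpa using hw)
  have hsurj : Function.Surjective ψ := by
    intro s
    have : ∀ (n : ℕ) (s : S), θ s = n → ∃ w, ψ w = s := by
      intro n
      induction n with
      | zero =>
        intro s hs
        exact ⟨1, by rw [map_one, (hzero s hs).symm]⟩
      | succ k ih =>
        intro s hs
        obtain ⟨p, ⟨hp1, hp2, hp3⟩, _⟩ := hufp s 1 k (by omega)
        obtain ⟨w, hw⟩ := ih p.2 hp3
        exact ⟨FreeMonoid.of ⟨p.1, hp2⟩ * w, by rw [map_mul, hw, hp1]; simp [hψ]⟩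
    exact this (θ s) s rfl
  exact (MulEquiv.ofBijective ψ ⟨hinj, hsurj⟩).symm
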